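/- Let V be a set of nodes, s, i ∈ V with s ≠ i, and suppose there is a partition V = V₁ ∪ V₂ ∪ V₃ and a bijection ζ : V₂ → V₃ such that p_{s,r}(u) = p_{i,r}(u) for r ∈ V₁ and p_{s,r}(u) = p_{i,ζ(r)}(u), p_{i,r}(u) = p_{s,ζ(r)}(u) for r ∈ V₂, for all u > 0, where p_{a,b}(u) ∈ (0,1) depends only on the distance d(a,b) through a strictly decreasing function of distance. Then for any α ∈ (0,1) and t, t' > 0, E[H_α(i,t')] − E[H_α(s,t')] = ∑_{j∈V₂} (p_{s,j}(t') − p_{i,j}(t'))·(p_{s,j}(t) − p_{i,j}(t)) ≥ 0, where E[H_α(v,t')] = ∑_{j∈V} [(1−α)·p_{s,j}(t)·(1−p_{v,j}(t')) + α·(1−p_{s,j}(t))·p_{v,j}(t')]. -/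
import Mathlib


theorem stmt_13 {V : Type*} [Fintype V] [DecidableEq V] (s i : V) (hsi : s ≠ i)
    (d : V → V → ℕ) (f : ℕ → ℝ → ℝ)
    (hanti : ∀ t : ℝ, 0 < t → StrictAnti (fun m : ℕ => f m t))
    (hrange : ∀ (m : ℕ) (t : ℝ), 0 < t → f m t ∈ Set.Ioo (0 : ℝ) 1)
    (V₁ V₂ V₃ : Finset V) (hpart : V₁ ∪ V₂ ∪ V₃ = Finset.univ)
    (h12 : Disjoint V₁ V₂) (h13 : Disjoint V₁ V₃) (h23 : Disjoint V₂ V₃)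
    (ζ : {x // x ∈ V₂} ≃ {x // x ∈ V₃})
    (hV₁ : ∀ u : ℝ, 0 < u → ∀ r ∈ V₁, f (d s r) u = f (d i r) u)
    (hV₂ : ∀ u : ℝ, 0 < u → ∀ r : {x // x ∈ V₂},
      f (d s r) u = f (d i (ζ r)) u ∧ f (d i r) u = f (d s (ζ r)) u)
    (α : ℝ) (hα : α ∈ Set.Ioo (0 : ℝ) 1) (t t' : ℝ) (ht : 0 < t) (ht' : 0 < t') :
    (∑ j, ((1 - α) * f (d s j) t * (1 - f (d i j) t') +
        α * (1 - f (d s j) t) * f (d i j) t')) -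
      (∑ j, ((1 - α) * f (d s j) t * (1 - f (d s j) t') +
        α * (1 - f (d s j) t) * f (d s j) t')) =
      ∑ j ∈ V₂, (f (d s j) t' - f (d i j) t') * (f (d s j) t - f (d i j) t) ∧
    0 ≤ ∑ j ∈ V₂, (f (d s j) t' - f (d i j) t') * (f (d s j) t - f (d i j) t) := by
  set D : V → ℝ := fun j => (f (d s j) t' - f (d i j) t') * (f (d s j) t - α) with hD
  constructor
  · have step1 :
        (∑ j, ((1 - α) * f (d s j) t * (1 - f (d i j) t') +
            α * (1 - f (d s j) t) * f (d i j) t')) -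
          (∑ j, ((1 - α) * f (d s j) t * (1 - f (d s j) t') +
            α * (1 - f (d s j) t) * f (d s j) t')) = ∑ j, D j := by
      rw [← Finset.sum_sub_distrib]
      exact Finset.sum_congr rfl (fun j _ => by simp only [hD]; ring)
    rw [step1]
    have hd13 : Disjoint (V₁ ∪ V₂) V₃ := Finset.disjoint_union_left.mpr ⟨h13, h23⟩
    have hsplit : (∑ j, D j) = (∑ j ∈ V₁, D j) + (∑ j ∈ V₂, D j) + (∑ j ∈ V₃, D j) := by
      rw [← hpart, Finset.sum_union hd13, Finset.sum_union h12]
    have h1 : (∑ j ∈ V₁, D j) = 0 :=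
      Finset.sum_eq_zero fun r hr => by
        simp only [hD, hV₁ t' ht' r hr, sub_self, zero_mul]
    have h3 : (∑ j ∈ V₃, D j) = ∑ r : {x // x ∈ V₂}, D (ζ r) := by
      rw [← Finset.sum_coe_sort V₃ D]
      exact (Equiv.sum_comp ζ (fun x : {x // x ∈ V₃} => D x)).symm
    have h2 : (∑ j ∈ V₂, D j) = ∑ r : {x // x ∈ V₂}, D r :=
      (Finset.sum_coe_sort V₂ D).symm
    rw [hsplit, h1, h2, h3, zero_add, ← Finset.sum_add_distrib]
    rw [← Finset.sum_coe_sort V₂ (fun j => (f (d s j) t' - f (d i j) t') *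
      (f (d s j) t - f (d i j) t))]
    refine Finset.sum_congr rfl fun r _ => ?_
    have ht'2 := hV₂ t' ht' r
    have ht2 := hV₂ t ht r
    simp only [hD, ← ht'2.1, ← ht'2.2, ← ht2.1, ← ht2.2]
    ring
  · refine Finset.sum_nonneg fun j _ => ?_
    rcases lt_trichotomy (d s j) (d i j) with h | h | h
    · have a := hanti t ht h
      have b := hanti t' ht' h
      exact mul_nonneg (by simpa using sub_nonneg.mpr b.le) (by simpa using sub_nonneg.mpr a.le)
    · rw [h]; simp
    · have a := hanti t ht h
      have b := hanti t' ht' h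
      have hb : (0:ℝ) ≤ (f (d i j) t' - f (d s j) t') * (f (d i j) t - f (d s j) t) :=
        mul_nonneg (sub_nonneg.mpr b.le) (sub_nonneg.mpr a.le)
      nlinarith [hb]
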